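/- arXiv:0704.2055 — 3 statements merged into one kernel-verified Lean document; each statement's English description precedes it below -/
import Mathlib

section
/- Let C ≥ 0, a < b, and D > e^{C·(b−a)} be real numbers. Then there exists T₀ ≥ 0 such that for all τ₊ ≥ T₀ and all τ₋ ≥ D·τ₊ there is a nonincreasing, continuously differentiable function τ : ℝ → ℝ with τ(s) = τ₋ for s ≤ a − 1, τ(s) = τ₊ for s ≥ b + 1, and τ'(s) ≤ −C·τ(s) − C for all s ∈ [a,b]. -/
set_option maxHeartbeats 1000000
open Real Set MeasureTheory intervalIntegral

private lemma exists_psi (a b δ : ℝ) (hab : a < b) (hδ0 : 0 < δ) (hδ1 : δ ≤ 1) :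
    ∃ ψ ρ : ℝ → ℝ, ContDiff ℝ 1 ψ ∧ (∀ s, HasDerivAt ψ (ρ s) s) ∧ Continuous ρ ∧
      (∀ s, 0 ≤ ρ s) ∧ (∀ s ∈ Set.Icc a b, ρ s = 1) ∧ Monotone ψ ∧
      (∀ s, s ≤ a - 1 → ψ s = 0) ∧ (∀ s, b + 1 ≤ s → ψ s = ψ (b + 1)) ∧
      (∀ s, ψ s ≤ ψ (b + 1)) ∧ b - a ≤ ψ (b + 1) ∧ ψ (b + 1) ≤ b - a + 2 * δ := by
  set ρ : ℝ → ℝ := fun t => max 0 (min 1 (min ((t - (a - δ)) / δ) ((b + δ - t) / δ))) with hρdef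
  have hρcont : Continuous ρ := by
    apply continuous_const.max
    apply continuous_const.min
    exact ((continuous_id.sub continuous_const).div_const δ).min
      ((continuous_const.sub continuous_id).div_const δ)
  have hρnn : ∀ s, 0 ≤ ρ s := fun s => le_max_left _ _
  have hρle1 : ∀ s, ρ s ≤ 1 := fun s => max_le zero_le_one (min_le_left _ _)
  have hρone : ∀ s ∈ Set.Icc a b, ρ s = 1 := by
    intro s hs
    have h1 : (1 : ℝ) ≤ (s - (a - δ)) / δ := by
      rw [le_div_iff₀ hδ0]; linarith [hs.1]
    have h2 : (1 : ℝ) ≤ (b + δ - s) / δ := by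
      rw [le_div_iff₀ hδ0]; linarith [hs.2]
    simp only [hρdef]
    rw [min_eq_left (le_min h1 h2), max_eq_right zero_le_one]
  have hρzero_left : ∀ s, s ≤ a - δ → ρ s = 0 := by
    intro s hs
    have h1 : (s - (a - δ)) / δ ≤ 0 := div_nonpos_iff.2 (Or.inr ⟨by linarith, hδ0.le⟩)
    have : min 1 (min ((s - (a - δ)) / δ) ((b + δ - s) / δ)) ≤ 0 :=
      le_trans (min_le_right _ _) (le_trans (min_le_left _ _) h1)
    exact max_eq_left this
  have hρzero_right : ∀ s, b + δ ≤ s → ρ s = 0 := by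
    intro s hs
    have h1 : (b + δ - s) / δ ≤ 0 := div_nonpos_iff.2 (Or.inr ⟨by linarith, hδ0.le⟩)
    have : min 1 (min ((s - (a - δ)) / δ) ((b + δ - s) / δ)) ≤ 0 :=
      le_trans (min_le_right _ _) (le_trans (min_le_right _ _) h1)
    exact max_eq_left this
  have hInt : ∀ u v : ℝ, IntervalIntegrable ρ volume u v :=
    fun u v => hρcont.intervalIntegrable u v
  set ψ : ℝ → ℝ := fun s => ∫ t in (a - 1)..s, ρ t with hψdef
  have hψderiv : ∀ s, HasDerivAt ψ (ρ s) s := by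
    intro s
    exact integral_hasDerivAt_right (hInt _ _)
      (hρcont.stronglyMeasurableAtFilter _ _) hρcont.continuousAt
  have hψdiff : Differentiable ℝ ψ := fun s => (hψderiv s).differentiableAt
  have hψC1 : ContDiff ℝ 1 ψ := by
    rw [contDiff_one_iff_deriv]
    refine ⟨hψdiff, ?_⟩
    have : deriv ψ = ρ := funext fun s => (hψderiv s).deriv
    rw [this]; exact hρcont
  have hadd : ∀ u v : ℝ, ψ v = ψ u + ∫ t in u..v, ρ t := by
    intro u v
    have := integral_add_adjacent_intervals (hInt (a-1) u) (hInt u v)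
    simp only [hψdef]; linarith [this]
  have hψmono : Monotone ψ := by
    intro u v huv
    rw [hadd u v]
    have : 0 ≤ ∫ t in u..v, ρ t := intervalIntegral.integral_nonneg huv (fun t _ => hρnn t)
    linarith
  have hzero_integral : ∀ u v : ℝ, (∀ t ∈ Set.uIcc u v, ρ t = 0) → (∫ t in u..v, ρ t) = 0 := by
    intro u v h
    rw [intervalIntegral.integral_congr (g := fun _ => (0:ℝ)) h]
    simp
  have hψleft : ∀ s, s ≤ a - 1 → ψ s = 0 := by
    intro s hs
    have h0 : ψ (a-1) = 0 := by simp [hψdef]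
    have := hadd s (a - 1)
    rw [h0] at this
    have hz : (∫ t in s..(a-1), ρ t) = 0 := by
      apply hzero_integral
      intro t ht
      rw [Set.uIcc_of_le hs] at ht
      exact hρzero_left t (by linarith [ht.2])
    rw [hz] at this; linarith
  have hψright : ∀ s, b + 1 ≤ s → ψ s = ψ (b + 1) := by
    intro s hs
    have := hadd (b + 1) s
    have hz : (∫ t in (b+1)..s, ρ t) = 0 := by
      apply hzero_integral
      intro t ht
      rw [Set.uIcc_of_le hs] at ht
      exact hρzero_right t (by linarith [ht.1])
    rw [hz] at this; linarith
  have hψub : ∀ s, ψ s ≤ ψ (b + 1) := by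
    intro s
    rcases le_total s (b + 1) with h | h
    · exact hψmono h
    · exact (hψright s h).le
  have hlb : b - a ≤ ψ (b + 1) := by
    have e1 : ψ (b+1) = ψ a + ∫ t in a..(b+1), ρ t := hadd a (b+1)
    have e2 : (∫ t in a..(b+1), ρ t) = (∫ t in a..b, ρ t) + ∫ t in b..(b+1), ρ t :=
      (integral_add_adjacent_intervals (hInt a b) (hInt b (b+1))).symm
    have e3 : (∫ t in a..b, ρ t) = b - a := by
      rw [intervalIntegral.integral_congr (g := fun _ => (1:ℝ))
        (fun t ht => hρone t (by rwa [Set.uIcc_of_le hab.le] at ht))]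
      simp
    have e4 : 0 ≤ ∫ t in b..(b+1), ρ t :=
      intervalIntegral.integral_nonneg (by linarith) (fun t _ => hρnn t)
    have e5 : 0 ≤ ψ a := by
      have := hψleft (a-1) le_rfl
      have := hψmono (show a - 1 ≤ a by linarith)
      linarith
    linarith
  have hub : ψ (b + 1) ≤ b - a + 2 * δ := by
    have o1 : a - 1 ≤ a - δ := by linarith
    have o2 : a - δ ≤ b + δ := by linarith
    have o3 : b + δ ≤ b + 1 := by linarith
    have e1 : ψ (b + 1) = (∫ t in (a-1)..(a-δ), ρ t) + ((∫ t in (a-δ)..(b+δ), ρ t)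
        + ∫ t in (b+δ)..(b+1), ρ t) := by
      rw [integral_add_adjacent_intervals (hInt (a-δ) (b+δ)) (hInt (b+δ) (b+1)),
        integral_add_adjacent_intervals (hInt (a-1) (a-δ)) (hInt (a-δ) (b+1))]
    have z1 : (∫ t in (a-1)..(a-δ), ρ t) = 0 := by
      apply hzero_integral
      intro t ht
      rw [Set.uIcc_of_le o1] at ht
      exact hρzero_left t ht.2
    have z2 : (∫ t in (b+δ)..(b+1), ρ t) = 0 := by
      apply hzero_integral
      intro t ht
      rw [Set.uIcc_of_le o3] at ht
      exact hρzero_right t ht.1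
    have m : (∫ t in (a-δ)..(b+δ), ρ t) ≤ ∫ t in (a-δ)..(b+δ), (1:ℝ) := by
      apply intervalIntegral.integral_mono_on o2 (hInt _ _)
        (intervalIntegrable_const) (fun t _ => hρle1 t)
    have mc : (∫ t in (a-δ)..(b+δ), (1:ℝ)) = b - a + 2 * δ := by
      simp; ring
    rw [e1, z1, z2]; linarith
  exact ⟨ψ, ρ, hψC1, hψderiv, hρcont, hρnn, hρone, hψmono, hψleft, hψright, hψub, hlb, hub⟩

private lemma key (C a b D lam δ : ℝ) (hC : 0 ≤ C) (hab : a < b) (hδ0 : 0 < δ) (hδ1 : δ ≤ 1)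
    (hCl : C ≤ lam) (hl0 : 0 < lam) (hD1 : 1 < D)
    (H : C * (1 - Real.exp (-(lam * (b - a + 2 * δ)))) <
      (D - 1) * lam * Real.exp (-(lam * (b - a + 2 * δ)))) :
    ∃ T₀ : ℝ, 0 ≤ T₀ ∧ ∀ τplus, T₀ ≤ τplus → ∀ τminus, D * τplus ≤ τminus →
      ∃ τ : ℝ → ℝ, ContDiff ℝ 1 τ ∧ Antitone τ ∧
        (∀ s, s ≤ a - 1 → τ s = τminus) ∧
        (∀ s, b + 1 ≤ s → τ s = τplus) ∧
        (∀ s ∈ Set.Icc a b, deriv τ s ≤ -C * τ s - C) := by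
  obtain ⟨ψ, ρ, hψC1, hψd, hρc, hρnn, hρ1, hψmono, hψl, hψr, hψub, hLlb, hLub⟩ :=
    exists_psi a b δ hab hδ0 hδ1
  set L := ψ (b + 1) with hLdef
  set q := Real.exp (-(lam * L)) with hqdef
  set qb := Real.exp (-(lam * (b - a + 2 * δ))) with hqbdef
  have hL0 : 0 < L := lt_of_lt_of_le (by linarith) hLlb
  have hq1 : q < 1 := Real.exp_lt_one_iff.2 (by nlinarith)
  have hqb0 : 0 < qb := Real.exp_pos _
  have hqbq : qb ≤ q := Real.exp_le_exp.2 (by nlinarith)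
  have hqb1 : qb < 1 := Real.exp_lt_one_iff.2 (by nlinarith)
  have hu : (0:ℝ) < 1 - q := by linarith
  have hune : (1:ℝ) - q ≠ 0 := ne_of_gt hu
  have hden : 0 < (D - 1) * lam * qb - C * (1 - qb) := by linarith
  refine ⟨C * (1 - qb) / ((D - 1) * lam * qb - C * (1 - qb)),
    div_nonneg (mul_nonneg hC (by linarith)) hden.le, ?_⟩
  intro τp hτp τm hτm
  have hτp0 : 0 ≤ τp := le_trans (div_nonneg (mul_nonneg hC (by linarith)) hden.le) hτp
  set Δ := τm - τp with hΔdef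
  have hΔD : (D - 1) * τp ≤ Δ := by nlinarith
  have hΔ : 0 ≤ Δ := le_trans (by nlinarith) hΔD
  refine ⟨fun s => τp + Δ * ((Real.exp (-(lam * ψ s)) - q) / (1 - q)), ?_, ?_, ?_, ?_, ?_⟩
  · exact contDiff_const.add (contDiff_const.mul
      (((Real.contDiff_exp.comp ((contDiff_const.mul hψC1).neg)).sub contDiff_const).div_const _))
  · intro s₁ s₂ h
    have hψ12 : ψ s₁ ≤ ψ s₂ := hψmono h
    have he : Real.exp (-(lam * ψ s₂)) ≤ Real.exp (-(lam * ψ s₁)) :=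
      Real.exp_le_exp.2 (by nlinarith)
    have h2 : (Real.exp (-(lam * ψ s₂)) - q) / (1 - q)
        ≤ (Real.exp (-(lam * ψ s₁)) - q) / (1 - q) :=
      (div_le_div_iff_of_pos_right hu).2 (by linarith)
    exact add_le_add_right (mul_le_mul_of_nonneg_left h2 hΔ) τp
  · intro s hs
    simp only [hψl s hs, mul_zero, neg_zero, Real.exp_zero, div_self hune]
    ring
  · intro s hs
    simp only [hψr s hs, ← hLdef, ← hqdef, sub_self, zero_div, mul_zero, add_zero]
  · intro s hs
    have hd : HasDerivAt (fun s => τp + Δ * ((Real.exp (-(lam * ψ s)) - q) / (1 - q)))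
        (Δ * ((Real.exp (-(lam * ψ s)) * (-(lam * ρ s))) / (1 - q))) s :=
      (((((hψd s).const_mul lam).neg.exp.sub_const q).div_const (1 - q)).const_mul Δ).const_add τp
    rw [hd.deriv, hρ1 s hs]
    set E := Real.exp (-(lam * ψ s)) with hEdef
    have hqE : q ≤ E := Real.exp_le_exp.2 (by nlinarith [hψub s])
    have hkey : (C * τp + C) * (1 - q) ≤ Δ * lam * q := by
      have s1 : (C * τp + C) * (1 - q) ≤ (C * τp + C) * (1 - qb) :=
        mul_le_mul_of_nonneg_left (by linarith) (by positivity)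
      have s2 : C * (1 - qb) ≤ τp * ((D - 1) * lam * qb - C * (1 - qb)) :=
        (div_le_iff₀ hden).mp hτp
      have s4 : (D - 1) * τp * (lam * qb) ≤ Δ * (lam * qb) :=
        mul_le_mul_of_nonneg_right hΔD (by positivity)
      have s5 : Δ * (lam * qb) ≤ Δ * (lam * q) :=
        mul_le_mul_of_nonneg_left (mul_le_mul_of_nonneg_left hqbq hl0.le) hΔ
      nlinarith
    have lhs_eq : Δ * ((E * (-(lam * 1))) / (1 - q)) = (-(Δ * lam * E)) / (1 - q) := by ring
    have rhs_eq : -C * (τp + Δ * ((E - q) / (1 - q))) - C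
        = ((-C * τp - C) * (1 - q) - C * (Δ * (E - q))) / (1 - q) := by
      field_simp; ring
    rw [lhs_eq, rhs_eq, div_le_div_iff_of_pos_right hu]
    nlinarith [mul_nonneg (mul_nonneg hΔ (sub_nonneg.2 hCl)) (sub_nonneg.2 hqE)]

/-- For `D > e^{C(b-a)}` and all sufficiently large `τ₊`, whenever
`τ₋ ≥ D·τ₊` there is a nonincreasing `C¹` interpolation from `τ₋` to `τ₊`
satisfying the decay condition `τ' ≤ -C·τ - C` on `[a,b]`. -/
theorem slope_interpolation_exists
    (C a b D : ℝ) (hC : 0 ≤ C) (hab : a < b) (hD : Real.exp (C * (b - a)) < D) :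
    ∃ T₀ : ℝ, 0 ≤ T₀ ∧ ∀ τplus, T₀ ≤ τplus → ∀ τminus, D * τplus ≤ τminus →
      ∃ τ : ℝ → ℝ, ContDiff ℝ 1 τ ∧ Antitone τ ∧
        (∀ s, s ≤ a - 1 → τ s = τminus) ∧
        (∀ s, b + 1 ≤ s → τ s = τplus) ∧
        (∀ s ∈ Set.Icc a b, deriv τ s ≤ -C * τ s - C) := by
  have hD1 : 1 < D := lt_of_le_of_lt (Real.one_le_exp (by nlinarith)) hD
  have hD0 : 0 < D := by linarith
  rcases eq_or_lt_of_le hC with hC0 | hCpos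
  · -- C = 0
    apply key C a b D 1 1 hC hab one_pos le_rfl (by rw [← hC0]; exact zero_le_one) one_pos hD1
    rw [← hC0, zero_mul]
    have := mul_pos (show (0:ℝ) < D - 1 by linarith)
      (Real.exp_pos (-(1 * (b - a + 2 * 1))))
    nlinarith
  · -- 0 < C
    have hlog : C * (b - a) < Real.log D := (Real.lt_log_iff_exp_lt hD0).2 hD
    set δ := min 1 ((Real.log D - C * (b - a)) / (4 * C)) with hδdef
    have hnum : 0 < (Real.log D - C * (b - a)) / (4 * C) := div_pos (by linarith) (by linarith)
    have hδ0 : 0 < δ := lt_min one_pos hnum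
    have hδ1 : δ ≤ 1 := min_le_left _ _
    apply key C a b D C δ hC hab hδ0 hδ1 le_rfl hCpos hD1
    have hδle : δ ≤ (Real.log D - C * (b - a)) / (4 * C) := min_le_right _ _
    have h2 : C * ((Real.log D - C * (b - a)) / (4 * C)) = (Real.log D - C * (b - a)) / 4 := by
      field_simp
    have h3 : C * δ ≤ (Real.log D - C * (b - a)) / 4 := by
      have := mul_le_mul_of_nonneg_left hδle hC
      linarith [h2 ▸ this]
    have h1 : C * (b - a + 2 * δ) < Real.log D := by nlinarith
    have h4 : (1:ℝ) < D * Real.exp (-(C * (b - a + 2 * δ))) := by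
      rw [← Real.exp_log hD0, ← Real.exp_add]
      calc (1:ℝ) = Real.exp 0 := Real.exp_zero.symm
        _ < _ := Real.exp_lt_exp.2 (by linarith)
    have h5 := mul_pos hCpos (show 0 < D * Real.exp (-(C * (b - a + 2 * δ))) - 1 by linarith)
    nlinarith [Real.exp_pos (-(C * (b - a + 2 * δ)))]
end

section
/- Let n ≥ 1 and 1 ≤ k ≤ n, let w₁,…,w_k be positive real numbers, let U ⊆ ℂⁿ be an open neighborhood of 0, and let ψ : U → ℝ be continuously differentiable over ℝ. Define h(x) = −ψ(x) − Σ_{j=1}^{k} w_j·log|x_j| on Ω = {x ∈ U : x_j ≠ 0 for all 1 ≤ j ≤ k}. Then there is ε > 0 such that for every x ∈ Ω with ‖x‖ < ε, the real Fréchet derivative Dh(x) is nonzero; in fact Dh(x) evaluated on the vector v = (−x₁,…,−x_k,0,…,0) satisfies Dh(x)(v) ≥ ½·Σ_{j=1}^{k} w_j. -/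
open scoped BigOperators

lemma hasFDerivAt_log_cabs (z : ℂ) (hz : z ≠ 0) :
    HasFDerivAt (fun z : ℂ => Real.log ‖z‖)
      ((‖z‖ ^ 2)⁻¹ • (innerSL ℝ z)) z := by
  have h1 : HasFDerivAt (fun z : ℂ => ‖z‖ ^ 2)
      (2 • ((innerSL ℝ z).comp (ContinuousLinearMap.id ℝ ℂ))) z := by
    simpa using (hasFDerivAt_id z).norm_sq
  have h2 := (h1.log (by simpa [sq] using (norm_ne_zero_iff.mpr hz))).const_mul (1/2 : ℝ)
  have hfun : (fun z : ℂ => (1/2 : ℝ) * Real.log (‖z‖ ^ 2))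
      = fun z : ℂ => Real.log ‖z‖ := by
    funext y
    rw [Real.log_pow]
    push_cast
    ring
  have hlin : (1/2 : ℝ) • ((‖z‖ ^ 2)⁻¹ • (2 • ((innerSL ℝ z).comp (ContinuousLinearMap.id ℝ ℂ))))
      = (‖z‖ ^ 2)⁻¹ • (innerSL ℝ z) := by
    ext u
    simp [smul_smul]
    ring
  rw [hfun, hlin] at h2
  exact h2

/-- Near a normal crossing point, the function
`h(x) = -ψ(x) - ∑_{j<k} w_j log|x_j|` has nonvanishing derivative: its
derivative in the direction `v = (-x₁,…,-x_k,0,…,0)` is at least `½ ∑ w_j`. -/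
theorem derivative_nonzero_near_divisor
    (n k : ℕ) (hn : 1 ≤ n) (hk1 : 1 ≤ k) (hkn : k ≤ n)
    (w : Fin n → ℝ) (hw : ∀ j : Fin n, (j : ℕ) < k → 0 < w j)
    (U : Set (EuclideanSpace ℂ (Fin n))) (hU : IsOpen U) (h0U : (0 : EuclideanSpace ℂ (Fin n)) ∈ U)
    (ψ : EuclideanSpace ℂ (Fin n) → ℝ) (hψ : ContDiffOn ℝ 1 ψ U)
    (h : EuclideanSpace ℂ (Fin n) → ℝ)
    (hdef : ∀ x, h x = -ψ x - ∑ j : Fin n,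
        (if (j : ℕ) < k then w j * Real.log ‖x j‖ else 0)) :
    ∃ ε > 0, ∀ x ∈ U, (∀ j : Fin n, (j : ℕ) < k → x j ≠ 0) → ‖x‖ < ε →
      fderiv ℝ h x ≠ 0 ∧
      (1 / 2) * ∑ j : Fin n, (if (j : ℕ) < k then w j else 0) ≤
        fderiv ℝ h x
          ((WithLp.equiv 2 (Fin n → ℂ)).symm
            (fun j => if (j : ℕ) < k then -(x j) else 0)) := by
  classical
  set S : ℝ := ∑ j : Fin n, (if (j : ℕ) < k then w j else 0) with hS
  have hk0 : (0 : ℕ) < k := hk1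
  have hSpos : 0 < S := by
    refine Finset.sum_pos' (fun j _ => ?_) ⟨⟨0, lt_of_lt_of_le hk1 hkn⟩, Finset.mem_univ _, ?_⟩
    · by_cases hj : (j : ℕ) < k
      · simpa [hj] using (hw j hj).le
      · simp [hj]
    · simp only [Fin.val_mk]
      rw [if_pos hk0]
      exact hw _ hk0
  have hcont : ContinuousOn (fderiv ℝ ψ) U := hψ.continuousOn_fderiv_of_isOpen hU le_rfl
  have hca : ContinuousAt (fderiv ℝ ψ) 0 := hcont.continuousAt (hU.mem_nhds h0U)
  set M : ℝ := ‖fderiv ℝ ψ (0 : EuclideanSpace ℂ (Fin n))‖ + 1 with hM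
  have hMpos : 0 < M := by positivity
  obtain ⟨δ, hδpos, hδ⟩ := Metric.continuousAt_iff.mp hca 1 one_pos
  refine ⟨min δ (S / 2 / M), lt_min hδpos (by positivity), fun x hxU hx0 hxε => ?_⟩
  have hxδ : dist x (0 : EuclideanSpace ℂ (Fin n)) < δ := by
    rw [dist_zero_right]; exact lt_of_lt_of_le hxε (min_le_left _ _)
  have hbound : ‖fderiv ℝ ψ x‖ < M := by
    have h1 := hδ hxδ
    rw [dist_eq_norm] at h1
    calc ‖fderiv ℝ ψ x‖
        ≤ ‖fderiv ℝ ψ x - fderiv ℝ ψ 0‖ + ‖fderiv ℝ ψ (0 : EuclideanSpace ℂ (Fin n))‖ := by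
          simpa using norm_add_le (fderiv ℝ ψ x - fderiv ℝ ψ 0) (fderiv ℝ ψ 0)
      _ < 1 + ‖fderiv ℝ ψ (0 : EuclideanSpace ℂ (Fin n))‖ := by linarith
      _ = M := by rw [hM]; ring
  set v : EuclideanSpace ℂ (Fin n) := (WithLp.equiv 2 (Fin n → ℂ)).symm
      (fun j => if (j : ℕ) < k then -(x j) else 0) with hv
  have hvj : ∀ j : Fin n, v j = if (j : ℕ) < k then -(x j) else 0 := fun j => rfl
  have hvnorm : ‖v‖ ≤ ‖x‖ := by
    rw [EuclideanSpace.norm_eq, EuclideanSpace.norm_eq]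
    apply Real.sqrt_le_sqrt
    refine Finset.sum_le_sum fun j _ => ?_
    rw [hvj]
    split
    · simp
    · simpa using sq_nonneg ‖x j‖
  have hψd : HasFDerivAt ψ (fderiv ℝ ψ x) x :=
    (((hψ.differentiableOn one_ne_zero).differentiableAt (hU.mem_nhds hxU))).hasFDerivAt
  set P : (j : Fin n) → (EuclideanSpace ℂ (Fin n) →L[ℝ] ℂ) :=
    fun j => (EuclideanSpace.proj j : EuclideanSpace ℂ (Fin n) →L[ℂ] ℂ).restrictScalars ℝ with hP
  set D : (j : Fin n) → (EuclideanSpace ℂ (Fin n) →L[ℝ] ℝ) := fun j =>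
    if (j : ℕ) < k then
      (w j) • (((‖x j‖ ^ 2)⁻¹ • innerSL ℝ (x j)).comp (P j))
    else 0 with hD
  have hterm : ∀ j : Fin n, HasFDerivAt
      (fun y : EuclideanSpace ℂ (Fin n) =>
        if (j : ℕ) < k then w j * Real.log ‖y j‖ else 0)
      (D j) x := by
    intro j
    by_cases hj : (j : ℕ) < k
    · simp only [hD, if_pos hj]
      have hPj : HasFDerivAt (fun y : EuclideanSpace ℂ (Fin n) => y j) (P j) x :=
        (P j).hasFDerivAt
      exact ((hasFDerivAt_log_cabs (x j) (hx0 j hj)).comp x hPj).const_mul (w j)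
    · simp only [hD, if_neg hj]
      exact hasFDerivAt_const 0 x
  have hsum : HasFDerivAt
      (fun y : EuclideanSpace ℂ (Fin n) => ∑ j : Fin n,
        (if (j : ℕ) < k then w j * Real.log ‖y j‖ else 0))
      (∑ j : Fin n, D j) x := by
    simpa using HasFDerivAt.fun_sum (fun j (_ : j ∈ Finset.univ) => hterm j)
  have hhfun : h = fun y : EuclideanSpace ℂ (Fin n) => -ψ y - ∑ j : Fin n,
      (if (j : ℕ) < k then w j * Real.log ‖y j‖ else 0) := funext hdef
  have hhd : HasFDerivAt h (-fderiv ℝ ψ x - ∑ j : Fin n, D j) x := by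
    rw [hhfun]; exact hψd.neg.sub hsum
  have hfd : fderiv ℝ h x = -fderiv ℝ ψ x - ∑ j : Fin n, D j := hhd.fderiv
  have hDv : ∀ j : Fin n, D j v = -(if (j : ℕ) < k then w j else 0) := by
    intro j
    by_cases hj : (j : ℕ) < k
    · have hne : ‖x j‖ ^ 2 ≠ 0 := pow_ne_zero 2 (norm_ne_zero_iff.mpr (hx0 j hj))
      have hPv : (P j) v = -(x j) := by
        simp [hP, hvj j, hj]
      simp only [hD, if_pos hj, ContinuousLinearMap.smul_apply,
        ContinuousLinearMap.comp_apply, hPv, innerSL_apply_apply, inner_neg_right,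
        real_inner_self_eq_norm_sq, smul_eq_mul]
      have hne'' : ‖x j‖ ≠ 0 := norm_ne_zero_iff.mpr (hx0 j hj)
      field_simp
    · simp [hD, if_neg hj]
  have heval : fderiv ℝ h x v = -(fderiv ℝ ψ x v) + S := by
    rw [hfd]
    simp only [ContinuousLinearMap.sub_apply, ContinuousLinearMap.neg_apply,
      ContinuousLinearMap.sum_apply]
    rw [Finset.sum_congr rfl fun j _ => hDv j, Finset.sum_neg_distrib]
    ring
  have hψv : |fderiv ℝ ψ x v| < S / 2 := by
    calc |fderiv ℝ ψ x v| ≤ ‖fderiv ℝ ψ x‖ * ‖v‖ := (fderiv ℝ ψ x).le_opNorm v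
      _ ≤ ‖fderiv ℝ ψ x‖ * ‖x‖ := by
          exact mul_le_mul_of_nonneg_left hvnorm (norm_nonneg _)
      _ < M * (S / 2 / M) :=
          mul_lt_mul'' hbound (lt_of_lt_of_le hxε (min_le_right _ _))
            (norm_nonneg _) (norm_nonneg _)
      _ = S / 2 := by
          rw [mul_comm, div_mul_cancel₀ _ (ne_of_gt hMpos)]
  have hge : S / 2 ≤ fderiv ℝ h x v := by
    rw [heval]
    have h2 := abs_lt.mp hψv
    linarith [h2.1, h2.2]
  constructor
  · intro hzero
    rw [hzero] at hge
    simp only [ContinuousLinearMap.zero_apply] at hge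
    linarith
  · calc (1 / 2) * S ≤ S / 2 := by ring_nf; exact le_rfl
      _ ≤ fderiv ℝ h x v := hge
end

section
/- Let n ≥ 1 and 1 ≤ k ≤ n, let U ⊆ ℂⁿ be an open neighborhood of 0, let ψ₀, ψ₁ : U → ℝ be continuously differentiable over ℝ, and let w⁰₁,…,w⁰_k and w¹₁,…,w¹_k be positive real numbers. For t ∈ [0,1] define h_t(x) = −(1−t)·ψ₀(x) − t·ψ₁(x) − Σ_{j=1}^{k} ((1−t)·w⁰_j + t·w¹_j)·log|x_j| on Ω = {x ∈ U : x_j ≠ 0 for all 1 ≤ j ≤ k}. Then there is ε > 0, independent of t, such that for every t ∈ [0,1] and every x ∈ Ω with ‖x‖ < ε, the real Fréchet derivative of h_t at x is nonzero. -/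
open scoped BigOperators

theorem logabs_hasFDerivAt (z : ℂ) (hz : z ≠ 0) :
    ∃ L : ℂ →L[ℝ] ℝ, HasFDerivAt (fun w : ℂ => Real.log ‖w‖) L z ∧ L z = 1 := by
  have hns : Complex.normSq z ≠ 0 := by simpa [Complex.normSq_eq_zero] using hz
  have hre : HasFDerivAt (fun w : ℂ => w.re) (Complex.reCLM : ℂ →L[ℝ] ℝ) z :=
    Complex.reCLM.hasFDerivAt
  have him : HasFDerivAt (fun w : ℂ => w.im) (Complex.imCLM : ℂ →L[ℝ] ℝ) z :=
    Complex.imCLM.hasFDerivAt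
  have hnsq : HasFDerivAt (fun w : ℂ => Complex.normSq w)
      ((z.re • (Complex.reCLM : ℂ →L[ℝ] ℝ) + z.re • (Complex.reCLM : ℂ →L[ℝ] ℝ)) +
        (z.im • (Complex.imCLM : ℂ →L[ℝ] ℝ) + z.im • (Complex.imCLM : ℂ →L[ℝ] ℝ))) z := by
    have := (hre.mul hre).add (him.mul him)
    exact this.congr_of_eventuallyEq (Filter.Eventually.of_forall fun w => by simp [Complex.normSq_apply])
  have hlog := (Real.hasDerivAt_log hns).comp_hasFDerivAt z hnsq
  have hfun : (fun w : ℂ => Real.log ‖w‖)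
      = fun w : ℂ => (2:ℝ)⁻¹ * Real.log (Complex.normSq w) := by
    funext w
    rw [Complex.norm_def, Real.log_sqrt (Complex.normSq_nonneg w)]
    ring
  refine ⟨_, hfun ▸ (hlog.const_mul (2:ℝ)⁻¹), ?_⟩
  simp only [ContinuousLinearMap.smul_apply, ContinuousLinearMap.add_apply,
    Complex.reCLM_apply, Complex.imCLM_apply, smul_eq_mul]
  rw [Complex.normSq_apply] at hns ⊢
  have hns2 : z.re ^ 2 + z.im ^ 2 ≠ 0 := by rwa [pow_two, pow_two]
  field_simp
  ring

theorem coord_le_norm {n : ℕ} (y : EuclideanSpace ℂ (Fin n)) (j : Fin n) :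
    ‖y j‖ ≤ ‖y‖ := by
  rw [EuclideanSpace.norm_eq]
  have h1 : ‖y j‖ = Real.sqrt (‖y j‖ ^ 2) := by
    rw [Real.sqrt_sq (norm_nonneg _)]
  rw [h1]
  exact Real.sqrt_le_sqrt (Finset.single_le_sum (fun i _ => sq_nonneg ‖y i‖)
    (Finset.mem_univ j))

set_option maxHeartbeats 1000000 in
/-- For the family
`h_t(x) = -(1-t)ψ₀(x) - tψ₁(x) - ∑_{j<k} ((1-t)w⁰_j + t w¹_j) log|x_j|`,
there is an `ε > 0`, uniform in `t ∈ [0,1]`, such that `h_t` has nonvanishing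
derivative at every point of `Ω` of norm `< ε`. -/
theorem derivative_nonzero_near_divisor_family
    (n k : ℕ) (hn : 1 ≤ n) (hk1 : 1 ≤ k) (hkn : k ≤ n)
    (w0 w1 : Fin n → ℝ)
    (hw0 : ∀ j : Fin n, (j : ℕ) < k → 0 < w0 j)
    (hw1 : ∀ j : Fin n, (j : ℕ) < k → 0 < w1 j)
    (U : Set (EuclideanSpace ℂ (Fin n))) (hU : IsOpen U) (h0U : (0 : EuclideanSpace ℂ (Fin n)) ∈ U)
    (ψ0 ψ1 : EuclideanSpace ℂ (Fin n) → ℝ)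
    (hψ0 : ContDiffOn ℝ 1 ψ0 U) (hψ1 : ContDiffOn ℝ 1 ψ1 U)
    (h : ℝ → EuclideanSpace ℂ (Fin n) → ℝ)
    (hdef : ∀ t x, h t x = -((1 - t) * ψ0 x) - t * ψ1 x - ∑ j : Fin n,
        (if (j : ℕ) < k then ((1 - t) * w0 j + t * w1 j) * Real.log ‖x j‖ else 0)) :
    ∃ ε > 0, ∀ t ∈ Set.Icc (0 : ℝ) 1, ∀ x ∈ U,
      (∀ j : Fin n, (j : ℕ) < k → x j ≠ 0) → ‖x‖ < ε →
      fderiv ℝ (h t) x ≠ 0 := by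
  classical
  obtain ⟨r, hr, hrU⟩ := Metric.isOpen_iff.1 hU 0 h0U
  set B : Set (EuclideanSpace ℂ (Fin n)) := Metric.closedBall 0 (r/2) with hB
  have hBU : B ⊆ U := fun y hy => hrU (by
    rw [Metric.mem_ball]
    exact lt_of_le_of_lt (Metric.mem_closedBall.1 hy) (by linarith))
  have hBc : IsCompact B := isCompact_closedBall _ _
  have hc0 : ContinuousOn (fderiv ℝ ψ0) U := hψ0.continuousOn_fderiv_of_isOpen hU le_rfl
  have hc1 : ContinuousOn (fderiv ℝ ψ1) U := hψ1.continuousOn_fderiv_of_isOpen hU le_rfl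
  obtain ⟨C0, hC0⟩ := hBc.exists_bound_of_continuousOn (hc0.mono hBU)
  obtain ⟨C1, hC1⟩ := hBc.exists_bound_of_continuousOn (hc1.mono hBU)
  set j0 : Fin n := ⟨0, lt_of_lt_of_le hk1 hkn⟩ with hj0
  have hj0k : (j0 : ℕ) < k := hk1
  set m : ℝ := min (w0 j0) (w1 j0) with hmdef
  have hm : 0 < m := lt_min (hw0 j0 hj0k) (hw1 j0 hj0k)
  set Cp : ℝ := max (max C0 C1) 1 with hCpdef
  have hCp1 : 1 ≤ Cp := le_max_right _ _
  have hCp0 : 0 < Cp := lt_of_lt_of_le one_pos hCp1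
  refine ⟨min (r/2) (m / (2*Cp)), lt_min (by linarith) (by positivity), ?_⟩
  intro t ht x hxU hxne hxε
  have hxr : ‖x‖ < r/2 := lt_of_lt_of_le hxε (min_le_left _ _)
  have hxm : ‖x‖ < m / (2*Cp) := lt_of_lt_of_le hxε (min_le_right _ _)
  have hxB : x ∈ B := by
    rw [hB, Metric.mem_closedBall, dist_zero_right]; linarith
  have hd0 : DifferentiableAt ℝ ψ0 x :=
    (hψ0.differentiableOn one_ne_zero).differentiableAt (hU.mem_nhds hxU)
  have hd1 : DifferentiableAt ℝ ψ1 x :=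
    (hψ1.differentiableOn one_ne_zero).differentiableAt (hU.mem_nhds hxU)
  have hLex : ∀ j : Fin n, ∃ L : ℂ →L[ℝ] ℝ, ((j:ℕ) < k →
      HasFDerivAt (fun w : ℂ => Real.log ‖w‖) L (x j) ∧ L (x j) = 1) := by
    intro j
    by_cases hj : (j:ℕ) < k
    · obtain ⟨L, h1, h2⟩ := logabs_hasFDerivAt (x j) (hxne j hj)
      exact ⟨L, fun _ => ⟨h1, h2⟩⟩
    · exact ⟨0, fun hc => absurd hc hj⟩
  choose L hLp using hLex
  set c : Fin n → ℝ := fun j => (1 - t) * w0 j + t * w1 j with hcdef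
  set D : Fin n → (EuclideanSpace ℂ (Fin n) →L[ℝ] ℝ) := fun j =>
    if (j:ℕ) < k then c j • ((L j).comp ((EuclideanSpace.proj j).restrictScalars ℝ)) else 0
    with hDdef
  have hsum : HasFDerivAt (fun y : EuclideanSpace ℂ (Fin n) => ∑ j : Fin n,
      (if (j:ℕ) < k then c j * Real.log ‖y j‖ else 0)) (∑ j : Fin n, D j) x := by
    apply HasFDerivAt.fun_sum
    intro j _
    by_cases hj : (j:ℕ) < k
    · have hproj : HasFDerivAt (fun y : EuclideanSpace ℂ (Fin n) => y j)
          ((EuclideanSpace.proj j).restrictScalars ℝ) x :=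
        ((EuclideanSpace.proj (𝕜 := ℂ) j).restrictScalars ℝ).hasFDerivAt
      have h2 := (((hLp j hj).1).comp x hproj).const_mul (c j)
      simp only [hDdef, if_pos hj]
      simpa [Function.comp] using h2
    · simp only [hDdef, if_neg hj]
      simpa [hj] using hasFDerivAt_const (0:ℝ) x
  have hA : HasFDerivAt (h t)
      (-((1-t) • fderiv ℝ ψ0 x) - t • fderiv ℝ ψ1 x - ∑ j : Fin n, D j) x := by
    have hfun : h t = fun y => -((1 - t) * ψ0 y) - t * ψ1 y - ∑ j : Fin n,
        (if (j : ℕ) < k then c j * Real.log ‖y j‖ else 0) :=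
      funext (hdef t)
    rw [hfun]
    exact (((hd0.hasFDerivAt.const_mul (1-t)).neg).sub (hd1.hasFDerivAt.const_mul t)).sub hsum
  set v : EuclideanSpace ℂ (Fin n) := EuclideanSpace.single j0 (x j0) with hv
  have hval : (fderiv ℝ (h t) x) v
      = -((1-t) * (fderiv ℝ ψ0 x v)) - t * (fderiv ℝ ψ1 x v) - c j0 := by
    rw [hA.fderiv]
    simp only [ContinuousLinearMap.sub_apply, ContinuousLinearMap.neg_apply,
      ContinuousLinearMap.coe_smul', Pi.smul_apply, ContinuousLinearMap.coe_sum',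
      Finset.sum_apply, smul_eq_mul]
    congr 1
    rw [Finset.sum_eq_single j0]
    · simp only [hDdef, if_pos hj0k, ContinuousLinearMap.coe_smul', Pi.smul_apply,
        ContinuousLinearMap.coe_comp', Function.comp_apply,
        ContinuousLinearMap.coe_restrictScalars', smul_eq_mul]
      have : ((EuclideanSpace.proj (𝕜 := ℂ) j0) : EuclideanSpace ℂ (Fin n) → ℂ) v = x j0 := by
        simp [hv, EuclideanSpace.single_apply]
      rw [this, (hLp j0 hj0k).2, mul_one]
    · intro b _ hb
      by_cases hbk : (b:ℕ) < k
      · simp only [hDdef, if_pos hbk, ContinuousLinearMap.coe_smul', Pi.smul_apply,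
          ContinuousLinearMap.coe_comp', Function.comp_apply,
          ContinuousLinearMap.coe_restrictScalars', smul_eq_mul]
        have : ((EuclideanSpace.proj (𝕜 := ℂ) b) : EuclideanSpace ℂ (Fin n) → ℂ) v = 0 := by
          simp [hv, EuclideanSpace.single_apply, hb]
        rw [this, map_zero, mul_zero]
      · simp [hDdef, hbk]
    · simp
  have hvnorm : ‖v‖ ≤ ‖x‖ := by
    rw [hv, EuclideanSpace.norm_single]
    exact coord_le_norm x j0
  have hbound : ∀ (ψ : EuclideanSpace ℂ (Fin n) → ℝ) (C : ℝ),
      (∀ y ∈ B, ‖fderiv ℝ ψ y‖ ≤ C) → C ≤ Cp → |fderiv ℝ ψ x v| ≤ m/2 := by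
    intro ψ C hC hCle
    have h1 : ‖fderiv ℝ ψ x v‖ ≤ ‖fderiv ℝ ψ x‖ * ‖v‖ := (fderiv ℝ ψ x).le_opNorm v
    have h2 : ‖fderiv ℝ ψ x‖ ≤ Cp := le_trans (hC x hxB) hCle
    have h3 : ‖v‖ ≤ m / (2*Cp) := le_trans hvnorm (le_of_lt hxm)
    have h4 : ‖fderiv ℝ ψ x v‖ ≤ Cp * (m / (2*Cp)) := by
      calc ‖fderiv ℝ ψ x v‖ ≤ ‖fderiv ℝ ψ x‖ * ‖v‖ := h1
        _ ≤ Cp * (m / (2*Cp)) :=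
          mul_le_mul h2 h3 (norm_nonneg _) (le_of_lt hCp0)
    rw [Real.norm_eq_abs] at h4
    calc |fderiv ℝ ψ x v| ≤ Cp * (m / (2*Cp)) := h4
      _ = m/2 := by field_simp
  have hb0 : |fderiv ℝ ψ0 x v| ≤ m/2 :=
    hbound ψ0 C0 hC0 (le_trans (le_max_left C0 C1) (le_max_left _ _))
  have hb1 : |fderiv ℝ ψ1 x v| ≤ m/2 :=
    hbound ψ1 C1 hC1 (le_trans (le_max_right C0 C1) (le_max_left _ _))
  have hcm : m ≤ c j0 := by
    have h1 : m ≤ w0 j0 := min_le_left _ _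
    have h2 : m ≤ w1 j0 := min_le_right _ _
    have ht0 := ht.1
    have ht1 := ht.2
    simp only [hcdef]
    nlinarith
  have hneg : (fderiv ℝ (h t) x) v < 0 := by
    rw [hval]
    have ha0 : -(m/2) ≤ fderiv ℝ ψ0 x v := neg_le_of_abs_le hb0
    have ha1 : -(m/2) ≤ fderiv ℝ ψ1 x v := neg_le_of_abs_le hb1
    have ht0 := ht.1
    have ht1 := ht.2
    generalize hga0 : fderiv ℝ ψ0 x v = a0 at ha0 ⊢
    generalize hga1 : fderiv ℝ ψ1 x v = a1 at ha1 ⊢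
    generalize hgc : c j0 = cc at hcm ⊢
    nlinarith [mul_nonneg (by linarith : (0:ℝ) ≤ 1 - t)
        (by linarith : (0:ℝ) ≤ a0 + m/2),
      mul_nonneg ht0 (by linarith : (0:ℝ) ≤ a1 + m/2)]
  intro h0
  rw [h0] at hneg
  simp at hneg
end
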